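/- Assume G Gᴴ and G R_x Gᴴ are invertible. Then the 2N²×2N² real Fisher information matrix F̂ = (2T/σ²)·R(M), where M = (conj(Φ) conj(G) R_xᵀ Gᵀ Φᵀ) ⊗ (conj(Φ) conj(G) Gᵀ Φᵀ) (Kronecker product of N²×N² size), is invertible and tr(F̂⁻¹) = (σ²/T) · tr( (G R_x Gᴴ)⁻¹ ) · tr( (G Gᴴ)⁻¹ ). (Lemma 2: the Cramér–Rao bound for estimating the target response matrix H equals (σ²/T)·tr((G R_x Gᴴ)⁻¹)·tr((G Gᴴ)⁻¹), independent of the reflective beamforming Φ.) -/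

import Mathlib

open Matrix
open scoped ComplexOrder Kronecker

/-- The realification of a complex square matrix `M`:
the real block matrix [[Re M, −Im M], [Im M, Re M]]. -/
noncomputable def realify {n : Type*} [Fintype n] (M : Matrix n n ℂ) :
    Matrix (n ⊕ n) (n ⊕ n) ℝ :=
  Matrix.fromBlocks (M.map Complex.re) (-(M.map Complex.im))
    (M.map Complex.im) (M.map Complex.re)

section aux

variable {n : Type*} [Fintype n]

lemma map_re_mul (M N : Matrix n n ℂ) :
    (M * N).map Complex.re = M.map Complex.re * N.map Complex.re -
      M.map Complex.im * N.map Complex.im := by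
  ext i j
  simp [Matrix.mul_apply, Matrix.sub_apply, Complex.mul_re, Finset.sum_sub_distrib]

lemma map_im_mul (M N : Matrix n n ℂ) :
    (M * N).map Complex.im = M.map Complex.re * N.map Complex.im +
      M.map Complex.im * N.map Complex.re := by
  ext i j
  simp [Matrix.mul_apply, Matrix.add_apply, Complex.mul_im, Finset.sum_add_distrib]

lemma realify_mul (M N : Matrix n n ℂ) :
    realify (M * N) = realify M * realify N := by
  simp only [realify, Matrix.fromBlocks_multiply, map_re_mul, map_im_mul]
  congr 1
  · noncomm_ring
  · noncomm_ring
  · abel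
  · noncomm_ring

lemma realify_one [DecidableEq n] : realify (1 : Matrix n n ℂ) = 1 := by
  have h1 : (1 : Matrix n n ℂ).map Complex.re = 1 := by
    ext i j; by_cases h : i = j <;> simp [Matrix.one_apply, h]
  have h2 : (1 : Matrix n n ℂ).map Complex.im = 0 := by
    ext i j; by_cases h : i = j <;> simp [Matrix.one_apply, h]
  rw [realify, h1, h2, neg_zero, Matrix.fromBlocks_one]

lemma trace_realify (M : Matrix n n ℂ) :
    Matrix.trace (realify M) = 2 * (Matrix.trace M).re := by
  simp only [realify, Matrix.trace, Matrix.diag, Fintype.sum_sum_type,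
    Matrix.fromBlocks_apply₁₁, Matrix.fromBlocks_apply₂₂, Matrix.map_apply,
    Complex.re_sum]
  ring

lemma trace_map_conj (M : Matrix n n ℂ) :
    Matrix.trace (M.map (starRingEnd ℂ)) = starRingEnd ℂ (Matrix.trace M) := by
  simp [Matrix.trace, Matrix.diag, map_sum]

end aux

theorem crb_extended_target_lemma2 {N M : ℕ}
    (T σ : ℝ) (hT : 0 < T) (hσ : 0 < σ)
    (G : Matrix (Fin N) (Fin M) ℂ)
    (Rx : Matrix (Fin M) (Fin M) ℂ) (hRx : Rx.PosSemidef)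
    (φ : Fin N → ℂ) (hφ : ∀ i, ‖φ i‖ = 1)
    (Φ : Matrix (Fin N) (Fin N) ℂ) (hΦ : Φ = Matrix.diagonal φ)
    (hGG : IsUnit (G * Gᴴ).det)
    (hGRG : IsUnit (G * Rx * Gᴴ).det)
    (Fhat : Matrix ((Fin N × Fin N) ⊕ (Fin N × Fin N))
                   ((Fin N × Fin N) ⊕ (Fin N × Fin N)) ℝ)
    (hFhat : Fhat = (2 * T / σ ^ 2) •
      realify ((Φ.map (starRingEnd ℂ) * G.map (starRingEnd ℂ) * Rxᵀ * Gᵀ * Φᵀ) ⊗ₖ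
               (Φ.map (starRingEnd ℂ) * G.map (starRingEnd ℂ) * Gᵀ * Φᵀ))) :
    IsUnit Fhat.det ∧
      Matrix.trace Fhat⁻¹ =
        (σ ^ 2 / T) * (Matrix.trace ((G * Rx * Gᴴ)⁻¹)).re *
          (Matrix.trace ((G * Gᴴ)⁻¹)).re := by
  have c := starRingEnd ℂ
  set X := G * Rx * Gᴴ with hX
  set Y := G * Gᴴ with hY
  -- unitarity of Φ
  have hns : ∀ i, Complex.normSq (φ i) = 1 := fun i => by
    rw [Complex.normSq_eq_norm_sq, hφ i]; norm_num
  have hu1 : ∀ i, star (φ i) * φ i = 1 := fun i => by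
    rw [show star (φ i) = (starRingEnd ℂ) (φ i) from rfl,
      ← Complex.normSq_eq_conj_mul_self, hns i]; norm_num
  have hu2 : ∀ i, φ i * star (φ i) = 1 := fun i => by
    rw [mul_comm]; exact hu1 i
  have hΦΦ : Φᴴ * Φ = 1 := by
    rw [hΦ, Matrix.diagonal_conjTranspose, Matrix.diagonal_mul_diagonal]
    have h : (fun i => star φ i * φ i) = fun _ => (1:ℂ) := funext fun i => hu1 i
    rw [h, Matrix.diagonal_one]
  have hΦΦ' : Φ * Φᴴ = 1 := by
    rw [hΦ, Matrix.diagonal_conjTranspose, Matrix.diagonal_mul_diagonal]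
    have h : (fun i => φ i * star φ i) = fun _ => (1:ℂ) := funext fun i => hu2 i
    rw [h, Matrix.diagonal_one]
  -- rewriting the conjugated factors
  have hRxc : Rx.map (starRingEnd ℂ) = Rxᵀ := by
    ext i j
    simp only [Matrix.map_apply, Matrix.transpose_apply]
    exact congrFun (congrFun hRx.isHermitian j) i
  have hGc : Gᴴ.map (starRingEnd ℂ) = Gᵀ := by
    ext i j
    simp [Matrix.conjTranspose_apply]
  have hΦc : Φᴴ.map (starRingEnd ℂ) = Φᵀ := by
    ext i j
    simp [Matrix.conjTranspose_apply]
  have hA : Φ.map (starRingEnd ℂ) * G.map (starRingEnd ℂ) * Rxᵀ * Gᵀ * Φᵀ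
      = (Φ * X * Φᴴ).map (starRingEnd ℂ) := by
    rw [hX]
    simp [Matrix.map_mul, hRxc, hGc, hΦc, Matrix.mul_assoc]
  have hB : Φ.map (starRingEnd ℂ) * G.map (starRingEnd ℂ) * Gᵀ * Φᵀ
      = (Φ * Y * Φᴴ).map (starRingEnd ℂ) := by
    rw [hY]
    simp [Matrix.map_mul, hGc, hΦc, Matrix.mul_assoc]
  -- key lemma on sandwiched conjugated matrices
  have key : ∀ (Z : Matrix (Fin N) (Fin N) ℂ), IsUnit Z.det →
      IsUnit ((Φ * Z * Φᴴ).map (starRingEnd ℂ)).det ∧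
        ((Φ * Z * Φᴴ).map (starRingEnd ℂ))⁻¹
          = (Φ * Z⁻¹ * Φᴴ).map (starRingEnd ℂ) ∧
        Matrix.trace (((Φ * Z * Φᴴ).map (starRingEnd ℂ))⁻¹)
          = starRingEnd ℂ (Matrix.trace Z⁻¹) := by
    intro Z hZ
    have hZZ : Z * Z⁻¹ = 1 := Matrix.mul_nonsing_inv Z hZ
    have h1 : (Φ * Z * Φᴴ) * (Φ * Z⁻¹ * Φᴴ) = 1 := by
      calc (Φ * Z * Φᴴ) * (Φ * Z⁻¹ * Φᴴ)
          = Φ * Z * (Φᴴ * Φ) * Z⁻¹ * Φᴴ := by simp only [Matrix.mul_assoc]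
        _ = 1 := by
            rw [hΦΦ, Matrix.mul_one, Matrix.mul_assoc Φ Z Z⁻¹, hZZ,
              Matrix.mul_one, hΦΦ']
    have h2 : ((Φ * Z * Φᴴ).map (starRingEnd ℂ)) * ((Φ * Z⁻¹ * Φᴴ).map (starRingEnd ℂ)) = 1 := by
      rw [← Matrix.map_mul, h1]
      exact Matrix.map_one _ (map_zero _) (map_one _)
    have hu := Matrix.isUnit_det_of_right_inverse h2
    have hinv := Matrix.inv_eq_right_inv h2
    refine ⟨hu, hinv, ?_⟩
    rw [hinv, trace_map_conj]
    congr 1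
    rw [Matrix.trace_mul_comm, ← Matrix.mul_assoc, hΦΦ, Matrix.one_mul]
  obtain ⟨hXu, hXinv, hXtr⟩ := key X hGRG
  obtain ⟨hYu, hYinv, hYtr⟩ := key Y hGG
  set A := (Φ * X * Φᴴ).map (starRingEnd ℂ) with hAdef
  set B := (Φ * Y * Φᴴ).map (starRingEnd ℂ) with hBdef
  rw [hA, hB] at hFhat
  -- Kronecker product invertibility and inverse
  have hKu : IsUnit (A ⊗ₖ B).det := by
    rw [Matrix.det_kronecker]
    exact (hXu.pow _).mul (hYu.pow _)
  have hKK : (A ⊗ₖ B) * (A⁻¹ ⊗ₖ B⁻¹) = 1 := by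
    rw [← Matrix.mul_kronecker_mul, Matrix.mul_nonsing_inv A hXu,
      Matrix.mul_nonsing_inv B hYu, Matrix.one_kronecker_one]
  -- scalars
  have hT0 : T ≠ 0 := ne_of_gt hT
  have hσ0 : (σ : ℝ) ^ 2 ≠ 0 := pow_ne_zero 2 (ne_of_gt hσ)
  set c0 : ℝ := 2 * T / σ ^ 2 with hc0
  have hc0inv : σ ^ 2 / (2 * T) * c0 = 1 := by
    field_simp [hc0]
    rw [hc0]; field_simp
  -- right inverse of Fhat
  have hrinv : Fhat * ((σ ^ 2 / (2 * T)) • realify (A⁻¹ ⊗ₖ B⁻¹)) = 1 := by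
    rw [hFhat, Matrix.smul_mul, Matrix.mul_smul, smul_smul, mul_comm c0,
      hc0inv, one_smul, ← realify_mul, hKK, realify_one]
  have hFu : IsUnit Fhat.det := Matrix.isUnit_det_of_right_inverse hrinv
  refine ⟨hFu, ?_⟩
  rw [Matrix.inv_eq_right_inv hrinv]
  -- realness of the traces
  have hXh : X⁻¹.IsHermitian :=
    (Matrix.isHermitian_mul_mul_conjTranspose G hRx.isHermitian).inv
  have hYh : Y⁻¹.IsHermitian := by
    have : Y.IsHermitian := by
      have := Matrix.isHermitian_mul_mul_conjTranspose G
        (Matrix.isHermitian_one (α := ℂ) (n := Fin M))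
      simpa [Matrix.mul_one] using this
    exact this.inv
  have hXre : Matrix.trace X⁻¹ = ((Matrix.trace X⁻¹).re : ℂ) := by
    have := Matrix.trace_conjTranspose X⁻¹
    rw [hXh.eq] at this
    exact (Complex.conj_eq_iff_re.mp this.symm).symm
  have hYre : Matrix.trace Y⁻¹ = ((Matrix.trace Y⁻¹).re : ℂ) := by
    have := Matrix.trace_conjTranspose Y⁻¹
    rw [hYh.eq] at this
    exact (Complex.conj_eq_iff_re.mp this.symm).symm
  have htrK : Matrix.trace (A⁻¹ ⊗ₖ B⁻¹)
      = ((Matrix.trace X⁻¹).re * (Matrix.trace Y⁻¹).re : ℝ) := by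
    rw [Matrix.trace_kronecker, hXtr, hYtr, hXre, hYre]
    push_cast [Complex.conj_ofReal]
    simp
  rw [Matrix.trace_smul, trace_realify, htrK]
  simp only [Complex.ofReal_re, smul_eq_mul]
  field_simp
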